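/- (Theorem of Hillen–Othmer, part (c).) Under assumptions (T1), (T2), (T3) and (T4), every nonzero eigenvalue μ ∈ ℂ of (the complexification of) the turning operator 𝓛 on L²(V;ℂ) satisfies -2λ < Re μ ≤ -μ₂ < 0, where μ₂ = λ(1 - ‖𝒯‖_{⟨1⟩⊥→⟨1⟩⊥}); moreover, to within scalar multiples the constant function 1 is the only eigenfunction of 𝓛 that is nonnegative a.e. and not a.e. zero. -/

import Mathlib

open MeasureTheory
open scoped RealInnerProductSpace

section AuxHO

variable {α : Type*} [MeasurableSpace α] {μ : Measure α} [IsFiniteMeasure μ]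

-- T kernel in L2 of product
lemma aux_memLp_T (T : α → α → ℝ) (hT : Measurable (Function.uncurry T))
    (hTsq : Integrable (fun z => T z.1 z.2 ^ 2) (μ.prod μ)) :
    MemLp (fun z : α × α => T z.1 z.2) 2 (μ.prod μ) :=
  (memLp_two_iff_integrable_sq hT.aestronglyMeasurable).mpr hTsq

lemma aux_memLp_snd {E : Type*} [NormedAddCommGroup E] {f : α → E} (hf : MemLp f 2 μ) :
    MemLp (fun z : α × α => f z.2) 2 (μ.prod μ) := by
  have h1 : MemLp f 2 ((μ Set.univ) • μ) := hf.smul_measure (measure_ne_top μ _)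
  have h2 : MemLp f 2 ((μ.prod μ).map Prod.snd) := by rwa [Measure.map_snd_prod]
  exact (memLp_map_measure_iff h2.1 measurable_snd.aemeasurable).1 h2

lemma aux_integrable_kernel {E : Type*} [NormedAddCommGroup E] [NormedSpace ℝ E]
    (T : α → α → ℝ) (hT : Measurable (Function.uncurry T))
    (hTsq : Integrable (fun z => T z.1 z.2 ^ 2) (μ.prod μ))
    {f : α → E} (hf : MemLp f 2 μ) :
    Integrable (fun z : α × α => T z.1 z.2 • f z.2) (μ.prod μ) := by
  have h := (aux_memLp_snd hf).smul (aux_memLp_T T hT hTsq)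
    (p := 2) (q := 2) (r := 1) (hpqr := ⟨by norm_num [ENNReal.inv_two_add_inv_two]⟩)
  exact memLp_one_iff_integrable.mp h

lemma aux_fubini (T : α → α → ℝ) (hT : Measurable (Function.uncurry T))
    (hTsq : Integrable (fun z => T z.1 z.2 ^ 2) (μ.prod μ))
    (hTnorm : ∀ᵐ v' ∂μ, ∫ v, T v v' ∂μ = 1)
    {f : α → ℝ} (hf : MemLp f 2 μ) :
    ∫ v, (∫ v', T v v' * f v' ∂μ) ∂μ = ∫ v', f v' ∂μ := by
  have hInt : Integrable (fun z : α × α => T z.1 z.2 * f z.2) (μ.prod μ) :=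
    aux_integrable_kernel T hT hTsq hf
  rw [integral_integral_swap hInt]
  refine integral_congr_ae ?_
  filter_upwards [hTnorm] with v' hv'
  rw [integral_mul_const, hv', one_mul]

open scoped ComplexConjugate in
lemma aux_int_sq (u : Lp ℝ 2 μ) : ∫ v, (u : α → ℝ) v ^ 2 ∂μ = ‖u‖ ^ 2 := by
  have h := real_inner_self_eq_norm_sq u
  rw [L2.inner_def] at h
  rw [← h]
  refine integral_congr_ae (Filter.Eventually.of_forall fun v => ?_)
  simp [RCLike.inner_apply, sq]

lemma aux_integrable_sq (u : Lp ℝ 2 μ) : Integrable (fun v => (u : α → ℝ) v ^ 2) μ :=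
  (memLp_two_iff_integrable_sq (Lp.aestronglyMeasurable u)).mp (Lp.memLp u)

lemma aux_norm_sq (q : Lp ℂ 2 μ) (u w : Lp ℝ 2 μ)
    (hu : (u : α → ℝ) =ᵐ[μ] fun v => ((q : α → ℂ) v).re)
    (hw : (w : α → ℝ) =ᵐ[μ] fun v => ((q : α → ℂ) v).im) :
    ‖q‖ ^ 2 = ‖u‖ ^ 2 + ‖w‖ ^ 2 := by
  have h1 : ‖q‖ ^ 2 = RCLike.re (inner (𝕜 := ℂ) q q) := (inner_self_eq_norm_sq q).symm
  rw [L2.inner_def, ← integral_re (L2.integrable_inner q q)] at h1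
  have h2 : ∫ v, RCLike.re (inner (𝕜 := ℂ) ((q : α → ℂ) v) ((q : α → ℂ) v)) ∂μ
      = ∫ v, ((u : α → ℝ) v ^ 2 + (w : α → ℝ) v ^ 2) ∂μ := by
    refine integral_congr_ae ?_
    filter_upwards [hu, hw] with v hv hv'
    rw [hv, hv']
    simp only [RCLike.inner_apply, RCLike.re_to_complex, Complex.mul_re,
      Complex.conj_re, Complex.conj_im, sq]
    ring
  rw [h1, h2, integral_add (aux_integrable_sq u) (aux_integrable_sq w),
    aux_int_sq, aux_int_sq]

lemma aux_int_split (q : Lp ℂ 2 μ) (u w : Lp ℝ 2 μ)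
    (hu : (u : α → ℝ) =ᵐ[μ] fun v => ((q : α → ℂ) v).re)
    (hw : (w : α → ℝ) =ᵐ[μ] fun v => ((q : α → ℂ) v).im) :
    ∫ v, (q : α → ℂ) v ∂μ = (∫ v, (u : α → ℝ) v ∂μ : ℝ) + (∫ v, (w : α → ℝ) v ∂μ : ℝ) * Complex.I := by
  have hq : Integrable (q : α → ℂ) μ := (Lp.memLp q).integrable one_le_two
  have hre : (∫ v, (q : α → ℂ) v ∂μ).re = ∫ v, (u : α → ℝ) v ∂μ := by
    rw [← RCLike.re_to_complex, ← integral_re hq]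
    exact (integral_congr_ae (hu.mono fun v hv => by simpa using hv)).symm
  have him : (∫ v, (q : α → ℂ) v ∂μ).im = ∫ v, (w : α → ℝ) v ∂μ := by
    rw [← RCLike.im_to_complex, ← integral_im hq]
    exact (integral_congr_ae (hw.mono fun v hv => by simpa using hv)).symm
  apply Complex.ext <;> simp [hre, him]


end AuxHO

set_option maxHeartbeats 4000000 in
/-- (Hillen–Othmer, part (c).) Under (T1)–(T4), every nonzero eigenvalue `z ∈ ℂ` of the
complexification of the turning operator `𝓛` satisfies `-2λ < Re z ≤ -μ₂ < 0`, and, up to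
scalar multiples, the constant `1` is the only a.e. nonnegative, not a.e. zero eigenfunction
of `𝓛`. -/
theorem turning_operator_spectral_gap_and_positive_eigenfunction
    (n : ℕ) (V : Set (EuclideanSpace ℝ (Fin n)))
    (hVc : IsCompact V) (hVpos : 0 < volume V)
    (T : EuclideanSpace ℝ (Fin n) → EuclideanSpace ℝ (Fin n) → ℝ)
    (hTmeas : Measurable (Function.uncurry T))
    -- (T1)
    (hT1_nonneg : ∀ᵐ z ∂((volume.restrict V).prod (volume.restrict V)), 0 ≤ T z.1 z.2)
    (hT1_norm : ∀ᵐ v' ∂(volume.restrict V), ∫ v in V, T v v' = 1)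
    (hT1_sq : Integrable (fun z => (T z.1 z.2) ^ 2)
      ((volume.restrict V).prod (volume.restrict V)))
    -- (T2)
    (η₀ φ ψ : EuclideanSpace ℝ (Fin n) → ℝ)
    (hη₀ : MemLp η₀ 2 (volume.restrict V)) (hφ : MemLp φ 2 (volume.restrict V))
    (hψ : MemLp ψ 2 (volume.restrict V))
    (hη₀_nonneg : ∀ᵐ v ∂(volume.restrict V), 0 ≤ η₀ v)
    (hη₀_ne : ¬ (η₀ =ᵐ[volume.restrict V] 0))
    (hφ_pos : ∀ᵐ v ∂(volume.restrict V), 0 < φ v)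
    (hψ_pos : ∀ᵐ v ∂(volume.restrict V), 0 < ψ v)
    (hT2 : ∀ᵐ z ∂((volume.restrict V).prod (volume.restrict V)),
      η₀ z.1 * φ z.2 ≤ T z.1 z.2 ∧ T z.1 z.2 ≤ η₀ z.1 * ψ z.2)
    -- (T4)
    (hT4 : ∀ᵐ v ∂(volume.restrict V), ∫ v' in V, T v v' = 1)
    -- the real integral operator 𝒯 and turning operator 𝓛
    (𝒯 𝓛 : Lp ℝ 2 (volume.restrict V) →L[ℝ] Lp ℝ 2 (volume.restrict V))
    (h𝒯 : ∀ p : Lp ℝ 2 (volume.restrict V),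
      (𝒯 p : EuclideanSpace ℝ (Fin n) → ℝ) =ᵐ[volume.restrict V]
        fun v => ∫ v' in V, T v v' * p v')
    (lam : ℝ) (hlam : 0 < lam)
    (h𝓛 : 𝓛 = lam • (𝒯 - ContinuousLinearMap.id ℝ (Lp ℝ 2 (volume.restrict V))))
    -- the complexifications on L²(V;ℂ)
    (𝒯c 𝓛c : Lp ℂ 2 (volume.restrict V) →L[ℂ] Lp ℂ 2 (volume.restrict V))
    (h𝒯c : ∀ p : Lp ℂ 2 (volume.restrict V),
      (𝒯c p : EuclideanSpace ℝ (Fin n) → ℂ) =ᵐ[volume.restrict V]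
        fun v => ∫ v' in V, (T v v' : ℂ) * p v')
    (h𝓛c : 𝓛c = (lam : ℂ) • (𝒯c - ContinuousLinearMap.id ℂ (Lp ℂ 2 (volume.restrict V))))
    -- the constant function 1 as an element of L²(V)
    (one : Lp ℝ 2 (volume.restrict V))
    (hone : (one : EuclideanSpace ℝ (Fin n) → ℝ) =ᵐ[volume.restrict V] fun _ => 1)
    -- by (T1), 𝒯 maps ⟨1⟩⊥ into itself; 𝒯K is the restriction of 𝒯 to ⟨1⟩⊥
    (hinv : ∀ p ∈ (Submodule.span ℝ {one})ᗮ, 𝒯 p ∈ (Submodule.span ℝ {one})ᗮ)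
    (𝒯K : (Submodule.span ℝ {one})ᗮ →L[ℝ] (Submodule.span ℝ {one})ᗮ)
    (h𝒯K : 𝒯K = ContinuousLinearMap.codRestrict
      (𝒯.comp (Submodule.span ℝ {one})ᗮ.subtypeL) (Submodule.span ℝ {one})ᗮ
      (fun x => hinv x x.2))
    -- (T3)
    (hT3 : ‖𝒯K‖ < 1) :
    (0 < lam * (1 - ‖𝒯K‖)) ∧
    (∀ z : ℂ, z ≠ 0 →
      (∃ p : Lp ℂ 2 (volume.restrict V), p ≠ 0 ∧ 𝓛c p = z • p) →
      -2 * lam < z.re ∧ z.re ≤ -(lam * (1 - ‖𝒯K‖))) ∧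
    (∀ (r : ℝ) (f : Lp ℝ 2 (volume.restrict V)), 𝓛 f = r • f →
      (∀ᵐ v ∂(volume.restrict V), 0 ≤ (f : EuclideanSpace ℝ (Fin n) → ℝ) v) →
      ¬ ((f : EuclideanSpace ℝ (Fin n) → ℝ) =ᵐ[volume.restrict V] 0) →
      ∃ c : ℝ, f = c • one) := by
  classical
  haveI : IsFiniteMeasure (volume.restrict V) :=
    ⟨by rw [Measure.restrict_apply_univ]; exact hVc.measure_lt_top⟩
  -- basic facts
  have hinner_one : ∀ f : Lp ℝ 2 (volume.restrict V), (inner ℝ one f : ℝ) = ∫ v, f v ∂(volume.restrict V) := by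
    intro f
    rw [L2.inner_def]
    refine integral_congr_ae ?_
    filter_upwards [hone] with v hv
    simp [RCLike.inner_apply, hv]
  have hmem_orth : ∀ f : Lp ℝ 2 (volume.restrict V), f ∈ (Submodule.span ℝ {one})ᗮ ↔ ∫ v, f v ∂(volume.restrict V) = 0 := by
    intro f
    rw [Submodule.mem_orthogonal_singleton_iff_inner_right, hinner_one]
  have h𝒯int : ∀ f : Lp ℝ 2 (volume.restrict V),
      ∫ v, (𝒯 f : EuclideanSpace ℝ (Fin n) → ℝ) v ∂(volume.restrict V) = ∫ v, f v ∂(volume.restrict V) := by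
    intro f
    rw [integral_congr_ae (h𝒯 f)]
    exact aux_fubini T hTmeas hT1_sq hT1_norm (Lp.memLp f)
  have h𝒯one : 𝒯 one = one := by
    apply Lp.ext
    filter_upwards [h𝒯 one, hT4, hone] with v h1 h4 hv
    rw [h1]
    have e1 : ∫ v' in V, T v v' * one v' = ∫ v' in V, T v v' := by
      refine integral_congr_ae ?_
      filter_upwards [hone] with v' hv'
      rw [hv', mul_one]
    rw [e1, h4, hv]
  -- the norm bound on the orthogonal complement
  have horthle : ∀ (f : Lp ℝ 2 (volume.restrict V)) (hf : f ∈ (Submodule.span ℝ {one})ᗮ),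
      ‖𝒯 f‖ ≤ ‖𝒯K‖ * ‖f‖ := by
    intro f hf
    have hco : ((𝒯K ⟨f, hf⟩ : (Submodule.span ℝ {one})ᗮ) : Lp ℝ 2 (volume.restrict V)) = 𝒯 f := by
      rw [h𝒯K]; rfl
    have h := 𝒯K.le_opNorm ⟨f, hf⟩
    calc ‖𝒯 f‖ = ‖(𝒯K ⟨f, hf⟩ : (Submodule.span ℝ {one})ᗮ)‖ := by
          rw [← hco]; rfl
      _ ≤ ‖𝒯K‖ * ‖f‖ := h
  refine ⟨mul_pos hlam (by linarith), ?_, ?_⟩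
  · -- spectral bounds for complex eigenvalues
    rintro z hz ⟨p, hp0, hpeig⟩
    have hlamC : (lam : ℂ) ≠ 0 := Complex.ofReal_ne_zero.mpr hlam.ne'
    set w : ℂ := 1 + z / lam with hwdef
    have h𝒯cp : 𝒯c p = w • p := by
      rw [h𝓛c] at hpeig
      simp only [ContinuousLinearMap.smul_apply, ContinuousLinearMap.sub_apply,
        ContinuousLinearMap.id_apply] at hpeig
      have h1 : 𝒯c p - p = (z / lam) • p := by
        calc 𝒯c p - p = (lam : ℂ)⁻¹ • ((lam : ℂ) • (𝒯c p - p)) := by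
              rw [smul_smul, inv_mul_cancel₀ hlamC, one_smul]
          _ = (lam : ℂ)⁻¹ • (z • p) := by rw [hpeig]
          _ = (z / lam) • p := by rw [smul_smul, div_eq_inv_mul]
      have : 𝒯c p = p + (z / lam) • p := by rw [← h1]; abel
      rw [this, hwdef, add_smul, one_smul]
    obtain ⟨a, ha⟩ : ∃ a : Lp ℝ 2 (volume.restrict V),
        (a : EuclideanSpace ℝ (Fin n) → ℝ) =ᵐ[volume.restrict V]
          fun v => ((p : EuclideanSpace ℝ (Fin n) → ℂ) v).re :=
      ⟨Complex.reCLM.compLp p, Complex.reCLM.coeFn_compLp' p⟩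
    obtain ⟨b, hb⟩ : ∃ b : Lp ℝ 2 (volume.restrict V),
        (b : EuclideanSpace ℝ (Fin n) → ℝ) =ᵐ[volume.restrict V]
          fun v => ((p : EuclideanSpace ℝ (Fin n) → ℂ) v).im :=
      ⟨Complex.imCLM.compLp p, Complex.imCLM.coeFn_compLp' p⟩
    have hker : Integrable
        (fun y : EuclideanSpace ℝ (Fin n) × EuclideanSpace ℝ (Fin n) =>
          T y.1 y.2 • (p : EuclideanSpace ℝ (Fin n) → ℂ) y.2) ((volume.restrict V).prod (volume.restrict V)) :=
      aux_integrable_kernel T hTmeas hT1_sq (Lp.memLp p)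
    have hsec : ∀ᵐ v ∂(volume.restrict V), Integrable
        (fun v' => ((T v v' : ℂ)) * (p : EuclideanSpace ℝ (Fin n) → ℂ) v') (volume.restrict V) := by
      filter_upwards [hker.prod_right_ae] with v hv
      simpa only [Complex.real_smul] using hv
    have hre : (𝒯 a : EuclideanSpace ℝ (Fin n) → ℝ) =ᵐ[(volume.restrict V)]
        fun v => ((𝒯c p : EuclideanSpace ℝ (Fin n) → ℂ) v).re := by
      filter_upwards [h𝒯 a, h𝒯c p, hsec] with v h1 h2 h3
      rw [h1, h2]
      have e1 : ∫ v' in V, T v v' * a v'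
          = ∫ v' in V, ((T v v' : ℂ) * (p : EuclideanSpace ℝ (Fin n) → ℂ) v').re := by
        refine integral_congr_ae ?_
        filter_upwards [ha] with v' hv'
        rw [hv']
        simp [Complex.mul_re]
      rw [e1, ← RCLike.re_to_complex, ← integral_re h3]
      rfl
    have him : (𝒯 b : EuclideanSpace ℝ (Fin n) → ℝ) =ᵐ[(volume.restrict V)]
        fun v => ((𝒯c p : EuclideanSpace ℝ (Fin n) → ℂ) v).im := by
      filter_upwards [h𝒯 b, h𝒯c p, hsec] with v h1 h2 h3
      rw [h1, h2]
      have e1 : ∫ v' in V, T v v' * b v'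
          = ∫ v' in V, ((T v v' : ℂ) * (p : EuclideanSpace ℝ (Fin n) → ℂ) v').im := by
        refine integral_congr_ae ?_
        filter_upwards [hb] with v' hv'
        rw [hv']
        simp [Complex.mul_im]
      rw [e1, ← RCLike.im_to_complex, ← integral_im h3]
      rfl
    have hsum1 : ∫ v, (𝒯c p : EuclideanSpace ℝ (Fin n) → ℂ) v ∂(volume.restrict V)
        = ((∫ v, (𝒯 a : EuclideanSpace ℝ (Fin n) → ℝ) v ∂(volume.restrict V) : ℝ) : ℂ)
          + ((∫ v, (𝒯 b : EuclideanSpace ℝ (Fin n) → ℝ) v ∂(volume.restrict V) : ℝ) : ℂ) * Complex.I :=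
      aux_int_split (𝒯c p) (𝒯 a) (𝒯 b) hre him
    have hsum2 : ∫ v, (p : EuclideanSpace ℝ (Fin n) → ℂ) v ∂(volume.restrict V)
        = ((∫ v, (a : EuclideanSpace ℝ (Fin n) → ℝ) v ∂(volume.restrict V) : ℝ) : ℂ)
          + ((∫ v, (b : EuclideanSpace ℝ (Fin n) → ℝ) v ∂(volume.restrict V) : ℝ) : ℂ) * Complex.I :=
      aux_int_split p a b ha hb
    have hintTp : ∫ v, (𝒯c p : EuclideanSpace ℝ (Fin n) → ℂ) v ∂(volume.restrict V)
        = ∫ v, (p : EuclideanSpace ℝ (Fin n) → ℂ) v ∂(volume.restrict V) := by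
      rw [hsum1, hsum2, h𝒯int a, h𝒯int b]
    have hsm : ∫ v, (𝒯c p : EuclideanSpace ℝ (Fin n) → ℂ) v ∂(volume.restrict V)
        = w * ∫ v, (p : EuclideanSpace ℝ (Fin n) → ℂ) v ∂(volume.restrict V) := by
      rw [h𝒯cp]
      rw [integral_congr_ae (Lp.coeFn_smul w p)]
      simpa using integral_smul w (p : EuclideanSpace ℝ (Fin n) → ℂ)
    have hintp0 : ∫ v, (p : EuclideanSpace ℝ (Fin n) → ℂ) v ∂(volume.restrict V) = 0 := by
      have h1 : (w - 1) * ∫ v, (p : EuclideanSpace ℝ (Fin n) → ℂ) v ∂(volume.restrict V) = 0 := by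
        rw [sub_mul, one_mul, ← hsm, hintTp, sub_self]
      have h2 : w - 1 ≠ 0 := by
        rw [hwdef]
        simpa using div_ne_zero hz hlamC
      exact (mul_eq_zero.mp h1).resolve_left h2
    have hinta : ∫ v, (a : EuclideanSpace ℝ (Fin n) → ℝ) v ∂(volume.restrict V) = 0 := by
      rw [hintp0] at hsum2
      have := congrArg Complex.re hsum2
      simpa using this.symm
    have hintb : ∫ v, (b : EuclideanSpace ℝ (Fin n) → ℝ) v ∂(volume.restrict V) = 0 := by
      rw [hintp0] at hsum2
      have := congrArg Complex.im hsum2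
      simpa using this.symm
    have hale : ‖𝒯 a‖ ≤ ‖𝒯K‖ * ‖a‖ := horthle a ((hmem_orth a).mpr hinta)
    have hble : ‖𝒯 b‖ ≤ ‖𝒯K‖ * ‖b‖ := horthle b ((hmem_orth b).mpr hintb)
    have hnormp : ‖p‖ ^ 2 = ‖a‖ ^ 2 + ‖b‖ ^ 2 := aux_norm_sq p a b ha hb
    have hnormTp : ‖𝒯c p‖ ^ 2 = ‖𝒯 a‖ ^ 2 + ‖𝒯 b‖ ^ 2 :=
      aux_norm_sq (𝒯c p) (𝒯 a) (𝒯 b) hre him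
    have hTpnorm : ‖𝒯c p‖ = ‖w‖ * ‖p‖ := by
      rw [h𝒯cp, norm_smul]
    have hp_pos : (0 : ℝ) < ‖p‖ := norm_pos_iff.mpr hp0
    have hKnn : (0 : ℝ) ≤ ‖𝒯K‖ := norm_nonneg 𝒯K
    have habs : ‖w‖ ≤ ‖𝒯K‖ := by
      have h2 : ‖𝒯 a‖ ^ 2 ≤ (‖𝒯K‖ * ‖a‖) ^ 2 := pow_le_pow_left₀ (norm_nonneg _) hale 2
      have h3 : ‖𝒯 b‖ ^ 2 ≤ (‖𝒯K‖ * ‖b‖) ^ 2 := pow_le_pow_left₀ (norm_nonneg _) hble 2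
      rw [mul_pow] at h2 h3
      have hkey : (‖w‖) ^ 2 * ‖p‖ ^ 2 ≤ ‖𝒯K‖ ^ 2 * ‖p‖ ^ 2 := by
        have h1 : (‖w‖) ^ 2 * ‖p‖ ^ 2 = ‖𝒯 a‖ ^ 2 + ‖𝒯 b‖ ^ 2 := by
          rw [← hnormTp, hTpnorm]; ring
        rw [h1, hnormp, mul_add]
        linarith
      have hsq : (‖w‖) ^ 2 ≤ ‖𝒯K‖ ^ 2 :=
        le_of_mul_le_mul_right hkey (pow_pos hp_pos 2)
      exact le_of_pow_le_pow_left₀ two_ne_zero hKnn hsq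
    have hwre : |w.re| ≤ ‖w‖ := Complex.abs_re_le_norm w
    have hzre : z.re = lam * (w.re - 1) := by
      have hzw : z = (lam : ℂ) * (w - 1) := by
        rw [hwdef]
        field_simp
        ring
      rw [hzw]
      simp [Complex.mul_re]
    obtain ⟨hw1, hw2⟩ := abs_le.mp hwre
    constructor
    · have h4 : (-2 : ℝ) < w.re - 1 := by linarith
      have h5 := mul_lt_mul_of_pos_left h4 hlam
      rw [hzre]
      linarith
    · have h4 : w.re - 1 ≤ ‖𝒯K‖ - 1 := by linarith
      have h5 := mul_le_mul_of_nonneg_left h4 hlam.le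
      have h6 : -(lam * (1 - ‖𝒯K‖)) = lam * (‖𝒯K‖ - 1) := by ring
      rw [hzre, h6]
      linarith
  · -- uniqueness of the nonnegative eigenfunction
    intro r f hfeig hf_nonneg hf_ne
    rw [h𝓛] at hfeig
    simp only [ContinuousLinearMap.smul_apply, ContinuousLinearMap.sub_apply,
      ContinuousLinearMap.id_apply] at hfeig
    have h𝒯feq : 𝒯 f = f + (lam⁻¹ * r) • f := by
      have h1 : 𝒯 f - f = (lam⁻¹ * r) • f := by
        calc 𝒯 f - f = lam⁻¹ • (lam • (𝒯 f - f)) := by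
              rw [smul_smul, inv_mul_cancel₀ hlam.ne', one_smul]
          _ = lam⁻¹ • (r • f) := by rw [hfeig]
          _ = (lam⁻¹ * r) • f := by rw [smul_smul]
      rw [← h1]; abel
    have hint_f : Integrable (f : EuclideanSpace ℝ (Fin n) → ℝ) (volume.restrict V) :=
      (Lp.memLp f).integrable one_le_two
    have hIf : ∫ v, (f : EuclideanSpace ℝ (Fin n) → ℝ) v ∂(volume.restrict V) ≠ 0 := by
      intro h0
      exact hf_ne ((integral_eq_zero_iff_of_nonneg_ae hf_nonneg hint_f).mp h0)
    have hr0 : r = 0 := by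
      have h1 := h𝒯int f
      rw [h𝒯feq] at h1
      have h2 : ((f + (lam⁻¹ * r) • f : Lp ℝ 2 (volume.restrict V)) : EuclideanSpace ℝ (Fin n) → ℝ) =ᵐ[(volume.restrict V)]
          fun v => f v + (lam⁻¹ * r) * f v := by
        filter_upwards [Lp.coeFn_add f ((lam⁻¹ * r) • f), Lp.coeFn_smul (lam⁻¹ * r) f]
          with v hv hv'
        rw [hv]
        simp [hv']
      rw [integral_congr_ae h2, integral_add hint_f (hint_f.const_mul _),
        integral_const_mul] at h1
      have h3 : (lam⁻¹ * r) * ∫ v, (f : EuclideanSpace ℝ (Fin n) → ℝ) v ∂(volume.restrict V) = 0 :=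
        add_eq_left.mp h1
      rcases mul_eq_zero.mp h3 with h4 | h4
      · rcases mul_eq_zero.mp h4 with h5 | h5
        · exact absurd h5 (inv_ne_zero hlam.ne')
        · exact h5
      · exact absurd h4 hIf
    have h𝒯f : 𝒯 f = f := by
      rw [h𝒯feq, hr0, mul_zero, zero_smul, add_zero]
    set m : ℝ := ∫ v, (one : EuclideanSpace ℝ (Fin n) → ℝ) v ∂(volume.restrict V) with hmdef
    have hm : m = (volume V).toReal := by
      rw [hmdef, integral_congr_ae hone, integral_const, smul_eq_mul, mul_one,
        measureReal_def, Measure.restrict_apply_univ]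
    have hmpos : 0 < m := by
      rw [hm]
      exact ENNReal.toReal_pos hVpos.ne' hVc.measure_lt_top.ne
    set c : ℝ := (∫ v, (f : EuclideanSpace ℝ (Fin n) → ℝ) v ∂(volume.restrict V)) / m with hcdef
    set g : Lp ℝ 2 (volume.restrict V) := f - c • one with hgdef
    have hg_int : ∫ v, (g : EuclideanSpace ℝ (Fin n) → ℝ) v ∂(volume.restrict V) = 0 := by
      have h2 : (g : EuclideanSpace ℝ (Fin n) → ℝ) =ᵐ[(volume.restrict V)]
          fun v => f v - c * one v := by
        rw [hgdef]
        filter_upwards [Lp.coeFn_sub f (c • one), Lp.coeFn_smul c one] with v hv hv'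
        rw [hv]
        simp [hv']
      rw [integral_congr_ae h2, integral_sub hint_f
        (((Lp.memLp one).integrable one_le_two).const_mul c), integral_const_mul, ← hmdef,
        hcdef, div_mul_cancel₀ _ hmpos.ne', sub_self]
    have hgmem : g ∈ (Submodule.span ℝ {one})ᗮ := (hmem_orth g).mpr hg_int
    have h𝒯g : 𝒯 g = g := by
      rw [hgdef, map_sub, _root_.map_smul, h𝒯one, h𝒯f]
    have hgle : ‖g‖ ≤ ‖𝒯K‖ * ‖g‖ := by
      have := horthle g hgmem
      rwa [h𝒯g] at this
    have hg0 : g = 0 := by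
      by_contra hne
      have hpos : 0 < ‖g‖ := norm_pos_iff.mpr hne
      have := mul_lt_mul_of_pos_right hT3 hpos
      rw [one_mul] at this
      linarith
    refine ⟨c, ?_⟩
    have := sub_eq_zero.mp (hgdef ▸ hg0)
    exact this
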